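/- arXiv:math/9604233 — 2 statements merged into one kernel-verified Lean document; each statement's English description precedes it below -/
import Mathlib

section
/- Given an accumulating collision datum, the total energy of the subsystem of the first a+1 particles is conserved: the function t ↦ Σ_{i=1}^{a+1} ( m_i q_i(t) + (1/2) m_i v_i(t)² ) is constant on [0, t₀). -/
open Matrix Filter Set
def collMat (n : ℕ) (i : ℕ) (γ : ℝ) : Matrix (Fin n) (Fin n) ℝ :=
  Matrix.of fun j k =>
    if j.val = i ∧ k.val = i then γ
    else if j.val = i ∧ k.val = i + 1 then 1 - γ
    else if j.val = i + 1 ∧ k.val = i then 1 + γ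
    else if j.val = i + 1 ∧ k.val = i + 1 then -γ
    else if j = k then 1 else 0

/-- An accumulating collision datum for the falling-ball system with `n ≥ 2` particles of
positive masses `m`: a time `t₀ > 0`, a strictly increasing sequence of collision times
`0 < t_1 < t_2 < ⋯ < t₀` with `t_k → t₀`, an index `a ≤ n − 1` with collision types
`ty k ∈ {0, 1, …, a}` such that every value in `{0, …, a}` occurs infinitely often
(here `ty k = 0` is a floor collision and `ty k = i + 1` is a collision of the 0-based
particles `i` and `i + 1`), a bound `C > 0`, and functions `q, v : [0, t₀) → ℝⁿ`
satisfying conditions (a)–(e) of the paper.  The field `vminus k` records the left limit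
`v(t_k⁻)`. -/
structure AccumDatum (n : ℕ) (m : Fin n → ℝ) : Type where
  hn : 2 ≤ n
  hm : ∀ j, 0 < m j
  t0 : ℝ
  t0_pos : 0 < t0
  /-- collision times (0-indexed: `tc 0` is the paper's `t_1`) -/
  tc : ℕ → ℝ
  tc_pos : 0 < tc 0
  tc_mono : StrictMono tc
  tc_lt : ∀ k, tc k < t0
  tc_lim : Tendsto tc atTop (nhds t0)
  a : ℕ
  ha : a ≤ n - 1
  /-- collision types -/
  ty : ℕ → ℕ
  ty_le : ∀ k, ty k ≤ a
  /-- every value in `{0, …, a}` is attained by `ty` infinitely often -/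
  ty_inf : ∀ i, i ≤ a → ∀ K : ℕ, ∃ k, K ≤ k ∧ ty k = i
  C : ℝ
  C_pos : 0 < C
  q : ℝ → Fin n → ℝ
  v : ℝ → Fin n → ℝ
  /-- the left limit `v(t_k⁻)` -/
  vminus : ℕ → Fin n → ℝ
  /-- (a) `q` is continuous on `[0, t₀)` -/
  q_cont : ∀ j, ContinuousOn (fun t => q t j) (Ico 0 t0)
  /-- (a) `0 ≤ q_1(t) ≤ q_2(t) ≤ ⋯ ≤ q_n(t)` -/
  q_nonneg : ∀ t, 0 ≤ t → t < t0 → 0 ≤ q t ⟨0, by omega⟩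
  q_mono : ∀ t, 0 ≤ t → t < t0 → ∀ j j' : Fin n, j ≤ j' → q t j ≤ q t j'
  /-- (a) `|v_j(t)| ≤ C` -/
  v_bdd : ∀ t, 0 ≤ t → t < t0 → ∀ j, |v t j| ≤ C
  /-- (b) between collisions, `q' = v` -/
  q_deriv : ∀ t, 0 ≤ t → t < t0 → t ∉ range tc → ∀ j,
    HasDerivWithinAt (fun s => q s j) (v t j) (Ico 0 t0) t
  /-- (b) between collisions, `v' = -1` componentwise -/
  v_deriv : ∀ t, 0 ≤ t → t < t0 → t ∉ range tc → ∀ j,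
    HasDerivWithinAt (fun s => v s j) (-1) (Ico 0 t0) t
  /-- (c) `v` is right-continuous -/
  v_rc : ∀ t, 0 ≤ t → t < t0 → ∀ j,
    Tendsto (fun s => v s j) (nhdsWithin t (Ici t)) (nhds (v t j))
  /-- (c) `v` has left limit `vminus k` at `tc k` -/
  v_ll : ∀ k j, Tendsto (fun s => v s j) (nhdsWithin (tc k) (Iio (tc k))) (nhds (vminus k j))
  /-- (d) collision of particles `i`, `i+1` (0-based): `q_i = q_{i+1}`,
  `v_i(t_k⁻) > v_{i+1}(t_k⁻)` and `v⁺ = R_i v⁻` -/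
  coll_pair : ∀ k, ∀ i : ℕ, ∀ hi : i + 1 < n, ty k = i + 1 →
    q (tc k) ⟨i, Nat.lt_of_succ_lt hi⟩ = q (tc k) ⟨i + 1, hi⟩ ∧
    vminus k ⟨i, Nat.lt_of_succ_lt hi⟩ > vminus k ⟨i + 1, hi⟩ ∧
    v (tc k) = (collMat n i ((m ⟨i, Nat.lt_of_succ_lt hi⟩ - m ⟨i + 1, hi⟩) /
        (m ⟨i, Nat.lt_of_succ_lt hi⟩ + m ⟨i + 1, hi⟩))) *ᵥ vminus k
  /-- (e) floor collision: `q_1 = 0`, `v_1(t_k⁻) < 0`, `v_1⁺ = -v_1⁻`, and the other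
  velocities are unchanged -/
  coll_floor : ∀ k, ty k = 0 →
    q (tc k) ⟨0, by omega⟩ = 0 ∧
    vminus k ⟨0, by omega⟩ < 0 ∧
    v (tc k) ⟨0, by omega⟩ = -vminus k ⟨0, by omega⟩ ∧
    ∀ j : Fin n, j ≠ ⟨0, by omega⟩ → v (tc k) j = vminus k j
lemma collMat_mulVec_i {n i : ℕ} (hi : i + 1 < n) (γ : ℝ) (w : Fin n → ℝ) :
    (collMat n i γ *ᵥ w) ⟨i, Nat.lt_of_succ_lt hi⟩
      = γ * w ⟨i, Nat.lt_of_succ_lt hi⟩ + (1 - γ) * w ⟨i + 1, hi⟩ := by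
  show ∑ k, collMat n i γ ⟨i, Nat.lt_of_succ_lt hi⟩ k * w k = _
  rw [Finset.sum_eq_add_of_mem (⟨i, Nat.lt_of_succ_lt hi⟩ : Fin n) ⟨i+1, hi⟩
    (Finset.mem_univ _) (Finset.mem_univ _) (by simp [Fin.ext_iff])]
  · simp [collMat]
  · intro k _ hk
    have h1 : ¬ (k : ℕ) = i := fun h => hk.1 (Fin.ext h)
    have h2 : ¬ (k : ℕ) = i + 1 := fun h => hk.2 (Fin.ext h)
    have h3 : ¬ (⟨i, Nat.lt_of_succ_lt hi⟩ : Fin n) = k := by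
      simp [Fin.ext_iff]; omega
    simp [collMat, h1, h2, h3]

lemma collMat_mulVec_i1 {n i : ℕ} (hi : i + 1 < n) (γ : ℝ) (w : Fin n → ℝ) :
    (collMat n i γ *ᵥ w) ⟨i + 1, hi⟩
      = (1 + γ) * w ⟨i, Nat.lt_of_succ_lt hi⟩ + (-γ) * w ⟨i + 1, hi⟩ := by
  show ∑ k, collMat n i γ ⟨i+1, hi⟩ k * w k = _
  rw [Finset.sum_eq_add_of_mem (⟨i, Nat.lt_of_succ_lt hi⟩ : Fin n) ⟨i+1, hi⟩
    (Finset.mem_univ _) (Finset.mem_univ _) (by simp [Fin.ext_iff])]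
  · simp [collMat]
  · intro k _ hk
    have h1 : ¬ (k : ℕ) = i := fun h => hk.1 (Fin.ext h)
    have h2 : ¬ (k : ℕ) = i + 1 := fun h => hk.2 (Fin.ext h)
    have h3 : ¬ (⟨i+1, hi⟩ : Fin n) = k := by
      simp [Fin.ext_iff]; omega
    simp [collMat, h1, h2, h3]

lemma collMat_mulVec_other {n i : ℕ} (γ : ℝ) (w : Fin n → ℝ) (j : Fin n)
    (h1 : (j : ℕ) ≠ i) (h2 : (j : ℕ) ≠ i + 1) :
    (collMat n i γ *ᵥ w) j = w j := by
  show ∑ k, collMat n i γ j k * w k = _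
  rw [Finset.sum_eq_single j]
  · simp [collMat, h1, h2]
  · intro k _ hk
    have h3 : ¬ j = k := fun h => hk h.symm
    by_cases hki : (k : ℕ) = i
    · simp [collMat, h1, h2, h3, hki]
    · by_cases hki1 : (k : ℕ) = i + 1
      · simp [collMat, h1, h2, h3, hki, hki1]
      · simp [collMat, h1, h2, h3, hki, hki1]
  · intro h; exact absurd (Finset.mem_univ j) h

lemma elastic_pair (p r x y : ℝ) (hp : 0 < p) (hr : 0 < r) :
    p * ((p - r) / (p + r) * x + (1 - (p - r) / (p + r)) * y) ^ 2
      + r * ((1 + (p - r) / (p + r)) * x + (-((p - r) / (p + r))) * y) ^ 2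
    = p * x ^ 2 + r * y ^ 2 := by
  have h : p + r ≠ 0 := by positivity
  field_simp
  ring

lemma ke_jump (n : ℕ) (m : Fin n → ℝ) (D : AccumDatum n m) (k : ℕ) :
    ∑ j ∈ Finset.univ.filter (fun j : Fin n => j.val ≤ D.a), m j * (D.v (D.tc k) j) ^ 2
      = ∑ j ∈ Finset.univ.filter (fun j : Fin n => j.val ≤ D.a), m j * (D.vminus k j) ^ 2 := by
  have hn := D.hn
  rcases hty : D.ty k with _ | i
  · obtain ⟨-, -, hv0, hvj⟩ := D.coll_floor k hty
    refine Finset.sum_congr rfl fun j _ => ?_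
    by_cases hj : j = (⟨0, by omega⟩ : Fin n)
    · subst hj; rw [hv0]; ring
    · rw [hvj j hj]
  · have hia : i + 1 ≤ D.a := hty ▸ D.ty_le k
    have hi : i + 1 < n := by have := D.ha; omega
    obtain ⟨-, -, hR⟩ := D.coll_pair k i hi hty
    set γ : ℝ := (m ⟨i, Nat.lt_of_succ_lt hi⟩ - m ⟨i + 1, hi⟩) /
        (m ⟨i, Nat.lt_of_succ_lt hi⟩ + m ⟨i + 1, hi⟩) with hγ
    set S := Finset.univ.filter (fun j : Fin n => j.val ≤ D.a) with hS
    have mem0 : (⟨i, Nat.lt_of_succ_lt hi⟩ : Fin n) ∈ S := by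
      simp [hS]; omega
    have hne : (⟨i, Nat.lt_of_succ_lt hi⟩ : Fin n) ≠ ⟨i + 1, hi⟩ := by
      simp [Fin.ext_iff]
    have mem1 : (⟨i + 1, hi⟩ : Fin n) ∈ S.erase ⟨i, Nat.lt_of_succ_lt hi⟩ := by
      refine Finset.mem_erase.2 ⟨Ne.symm hne, ?_⟩
      simp [hS]; omega
    have key : ∀ u : Fin n → ℝ, ∑ j ∈ S, m j * u j ^ 2
        = m ⟨i, Nat.lt_of_succ_lt hi⟩ * u ⟨i, Nat.lt_of_succ_lt hi⟩ ^ 2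
          + (m ⟨i + 1, hi⟩ * u ⟨i + 1, hi⟩ ^ 2
            + ∑ j ∈ (S.erase ⟨i, Nat.lt_of_succ_lt hi⟩).erase ⟨i + 1, hi⟩, m j * u j ^ 2) := by
      intro u
      rw [← Finset.add_sum_erase S (fun j => m j * u j ^ 2) mem0,
        ← Finset.add_sum_erase (S.erase ⟨i, Nat.lt_of_succ_lt hi⟩)
          (fun j => m j * u j ^ 2) mem1]
    rw [key, key]
    have htail : ∑ j ∈ (S.erase ⟨i, Nat.lt_of_succ_lt hi⟩).erase ⟨i + 1, hi⟩,
          m j * (D.v (D.tc k) j) ^ 2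
        = ∑ j ∈ (S.erase ⟨i, Nat.lt_of_succ_lt hi⟩).erase ⟨i + 1, hi⟩,
          m j * (D.vminus k j) ^ 2 := by
      refine Finset.sum_congr rfl fun j hj => ?_
      obtain ⟨hj1, hj0, -⟩ := by
        have h1 := Finset.mem_erase.1 hj
        have h2 := Finset.mem_erase.1 h1.2
        exact (⟨h1.1, h2.1, h2.2⟩ : _ ∧ _ ∧ _)
      rw [hR, collMat_mulVec_other]
      · exact fun h => hj0 (Fin.ext h)
      · exact fun h => hj1 (Fin.ext h)
    rw [htail, hR, collMat_mulVec_i hi, collMat_mulVec_i1 hi]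
    have := elastic_pair (m ⟨i, Nat.lt_of_succ_lt hi⟩) (m ⟨i + 1, hi⟩)
      (D.vminus k ⟨i, Nat.lt_of_succ_lt hi⟩) (D.vminus k ⟨i + 1, hi⟩)
      (D.hm _) (D.hm _)
    rw [← hγ] at this
    linarith [this]

lemma energy_sum_eq (n : ℕ) (m : Fin n → ℝ) (D : AccumDatum n m) (k : ℕ) (t : ℝ) :
    ∑ j ∈ Finset.univ.filter (fun j : Fin n => j.val ≤ D.a),
        (m j * D.q t j + 1 / 2 * m j * D.v (D.tc k) j ^ 2)
      = ∑ j ∈ Finset.univ.filter (fun j : Fin n => j.val ≤ D.a),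
        (m j * D.q t j + 1 / 2 * m j * D.vminus k j ^ 2) := by
  rw [Finset.sum_add_distrib, Finset.sum_add_distrib]
  congr 1
  have h2 : ∀ u : Fin n → ℝ, ∑ j ∈ Finset.univ.filter (fun j : Fin n => j.val ≤ D.a),
      1 / 2 * m j * u j ^ 2
      = 1 / 2 * ∑ j ∈ Finset.univ.filter (fun j : Fin n => j.val ≤ D.a), m j * u j ^ 2 := by
    intro u
    rw [Finset.mul_sum]
    exact Finset.sum_congr rfl fun j _ => by ring
  rw [h2, h2, ke_jump]

lemma energy_contOn (n : ℕ) (m : Fin n → ℝ) (D : AccumDatum n m) :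
    ContinuousOn (fun t => ∑ j ∈ Finset.univ.filter (fun j : Fin n => j.val ≤ D.a),
      (m j * D.q t j + 1 / 2 * m j * D.v t j ^ 2)) (Ico 0 D.t0) := by
  intro t ht
  have hq : ∀ j, Tendsto (fun s => D.q s j) (nhdsWithin t (Ico 0 D.t0)) (nhds (D.q t j)) :=
    fun j => D.q_cont j t ht
  by_cases hc : t ∈ range D.tc
  · obtain ⟨k, rfl⟩ := hc
    generalize ht' : D.tc k = t at *
    show Tendsto _ (nhdsWithin t (Ico 0 D.t0)) _
    have hsplit : nhdsWithin t (Ico 0 D.t0)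
        = nhdsWithin t (Ico 0 D.t0 ∩ Iio t) ⊔ nhdsWithin t (Ico 0 D.t0 ∩ Ici t) := by
      rw [← nhdsWithin_union, ← inter_union_distrib_left, Iio_union_Ici, inter_univ]
    rw [hsplit, tendsto_sup]
    constructor
    · have hL : Tendsto (fun s => ∑ j ∈ Finset.univ.filter (fun j : Fin n => j.val ≤ D.a),
          (m j * D.q s j + 1 / 2 * m j * D.v s j ^ 2))
          (nhdsWithin t (Ico 0 D.t0 ∩ Iio t))
          (nhds (∑ j ∈ Finset.univ.filter (fun j : Fin n => j.val ≤ D.a),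
            (m j * D.q t j + 1 / 2 * m j * D.vminus k j ^ 2))) := by
        refine tendsto_finset_sum _ fun j _ => ?_
        have hqj := (hq j).mono_left
          (nhdsWithin_mono t (inter_subset_left (s := Ico 0 D.t0) (t := Iio t)))
        have hvj : Tendsto (fun s => D.v s j) (nhdsWithin t (Ico 0 D.t0 ∩ Iio t))
            (nhds (D.vminus k j)) := by
          rw [← ht']
          exact (D.v_ll k j).mono_left
            (nhdsWithin_mono _ (inter_subset_right (s := Ico 0 D.t0)))
        exact (hqj.const_mul (m j)).add ((hvj.pow 2).const_mul (1 / 2 * m j))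
      have heq : (∑ j ∈ Finset.univ.filter (fun j : Fin n => j.val ≤ D.a),
          (m j * D.q t j + 1 / 2 * m j * D.v t j ^ 2))
          = ∑ j ∈ Finset.univ.filter (fun j : Fin n => j.val ≤ D.a),
          (m j * D.q t j + 1 / 2 * m j * D.vminus k j ^ 2) := by
        rw [← ht']; exact energy_sum_eq n m D k (D.tc k)
      show Tendsto _ _ (nhds (∑ j ∈ Finset.univ.filter (fun j : Fin n => j.val ≤ D.a),
        (m j * D.q t j + 1 / 2 * m j * D.v t j ^ 2)))
      rw [heq]
      exact hL
    · refine tendsto_finset_sum _ fun j _ => ?_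
      have hqj := (hq j).mono_left
        (nhdsWithin_mono t (inter_subset_left (s := Ico 0 D.t0) (t := Ici t)))
      have hvj := (D.v_rc t ht.1 ht.2 j).mono_left
        (nhdsWithin_mono t (inter_subset_right (s := Ico 0 D.t0) (t := Ici t)))
      exact (hqj.const_mul (m j)).add ((hvj.pow 2).const_mul (1 / 2 * m j))
  · refine tendsto_finset_sum _ fun j _ => ?_
    have hvj := (D.v_deriv t ht.1 ht.2 hc j).continuousWithinAt
    exact ((hq j).const_mul (m j)).add ((hvj.pow 2).const_mul (1 / 2 * m j))

lemma energy_eq_of_no_coll (n : ℕ) (m : Fin n → ℝ) (D : AccumDatum n m) {u w : ℝ}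
    (hu : 0 ≤ u) (huw : u ≤ w) (hw : w < D.t0) (hnc : ∀ k, D.tc k ∉ Ioo u w) :
    ∑ j ∈ Finset.univ.filter (fun j : Fin n => j.val ≤ D.a),
        (m j * D.q u j + 1 / 2 * m j * D.v u j ^ 2)
      = ∑ j ∈ Finset.univ.filter (fun j : Fin n => j.val ≤ D.a),
        (m j * D.q w j + 1 / 2 * m j * D.v w j ^ 2) := by
  rcases eq_or_lt_of_le huw with rfl | hlt
  · rfl
  set E : ℝ → ℝ := fun t => ∑ j ∈ Finset.univ.filter (fun j : Fin n => j.val ≤ D.a),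
    (m j * D.q t j + 1 / 2 * m j * D.v t j ^ 2) with hE
  have hsub : Icc u w ⊆ Ico 0 D.t0 := fun x hx =>
    ⟨le_trans hu hx.1, lt_of_le_of_lt hx.2 hw⟩
  have hcont : ContinuousOn E (Icc u w) := (energy_contOn n m D).mono hsub
  have hd : ∀ x ∈ interior (Icc u w), HasDerivWithinAt E 0 (interior (Icc u w)) x := by
    rw [interior_Icc]
    intro x hx
    have hxc : x ∉ range D.tc := fun ⟨k, hk⟩ => hnc k (hk ▸ hx)
    have hx0 : 0 ≤ x := le_of_lt (lt_of_le_of_lt hu hx.1)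
    have hx1 : x < D.t0 := lt_of_lt_of_le hx.2 (le_of_lt hw)
    have hmem : Ico 0 D.t0 ∈ nhds x :=
      mem_of_superset (Ioo_mem_nhds (lt_of_le_of_lt hu hx.1) (lt_trans hx.2 hw))
        (fun y hy => ⟨hy.1.le, hy.2⟩)
    have hsum : HasDerivAt E (∑ j ∈ Finset.univ.filter (fun j : Fin n => j.val ≤ D.a),
        (m j * D.v x j + 1 / 2 * m j * ((2 : ℕ) * D.v x j ^ 1 * (-1)))) x := by
      refine HasDerivAt.fun_sum fun j _ => ?_
      have hqj := (D.q_deriv x hx0 hx1 hxc j).hasDerivAt hmem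
      have hvj := (D.v_deriv x hx0 hx1 hxc j).hasDerivAt hmem
      exact (hqj.const_mul (m j)).add ((hvj.pow 2).const_mul (1 / 2 * m j))
    have h0 : (∑ j ∈ Finset.univ.filter (fun j : Fin n => j.val ≤ D.a),
        (m j * D.v x j + 1 / 2 * m j * ((2 : ℕ) * D.v x j ^ 1 * (-1)))) = 0 := by
      refine Finset.sum_eq_zero fun j _ => ?_
      push_cast
      ring
    rw [h0] at hsum
    exact hsum.hasDerivWithinAt
  have hmono : MonotoneOn E (Icc u w) :=
    monotoneOn_of_hasDerivWithinAt_nonneg (convex_Icc u w) hcont hd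
      (fun _ _ => le_refl (0 : ℝ))
  have hanti : AntitoneOn E (Icc u w) :=
    antitoneOn_of_hasDerivWithinAt_nonpos (convex_Icc u w) hcont hd
      (fun _ _ => le_refl (0 : ℝ))
  exact le_antisymm (hmono ⟨le_refl u, huw⟩ ⟨huw, le_refl w⟩ huw)
    (hanti ⟨le_refl u, huw⟩ ⟨huw, le_refl w⟩ huw)

/-- given an accumulating collision datum, the total energy of the
subsystem of the first `a + 1` particles,
`t ↦ ∑_{i ≤ a} (m_i q_i(t) + (1/2) m_i v_i(t)²)`, is constant on `[0, t₀)`. -/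
theorem accum_subsystem_energy_constant (n : ℕ) (m : Fin n → ℝ) (D : AccumDatum n m) :
    ∀ t s : ℝ, 0 ≤ t → t < D.t0 → 0 ≤ s → s < D.t0 →
      ∑ i ∈ Finset.univ.filter (fun i : Fin n => i.val ≤ D.a),
          (m i * D.q t i + (1 / 2) * m i * D.v t i ^ 2) =
        ∑ i ∈ Finset.univ.filter (fun i : Fin n => i.val ≤ D.a),
          (m i * D.q s i + (1 / 2) * m i * D.v s i ^ 2) := by
  set E : ℝ → ℝ := fun t => ∑ j ∈ Finset.univ.filter (fun j : Fin n => j.val ≤ D.a),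
    (m j * D.q t j + 1 / 2 * m j * D.v t j ^ 2) with hE
  have claim : ∀ k : ℕ, ∀ t : ℝ, 0 ≤ t → t ≤ D.tc k → E t = E 0 := by
    intro k
    induction k with
    | zero =>
      intro t ht0 htc
      refine (energy_eq_of_no_coll n m D (le_refl 0) ht0
        (lt_of_le_of_lt htc (D.tc_lt 0)) fun j hj => ?_).symm
      have : D.tc 0 ≤ D.tc j := D.tc_mono.monotone (Nat.zero_le j)
      exact absurd hj.2 (not_lt.2 (le_trans htc this))
    | succ k ih =>
      intro t ht0 htc
      by_cases hle : t ≤ D.tc k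
      · exact ih t ht0 hle
      · push_neg at hle
        have htck : 0 ≤ D.tc k := le_of_lt (lt_of_lt_of_le D.tc_pos
          (D.tc_mono.monotone (Nat.zero_le k)))
        have heq : E (D.tc k) = E t := by
          refine energy_eq_of_no_coll n m D htck hle.le
            (lt_of_le_of_lt htc (D.tc_lt (k + 1))) fun j hj => ?_
          have hj1 : k < j := D.tc_mono.lt_iff_lt.1 hj.1
          have : D.tc (k + 1) ≤ D.tc j := D.tc_mono.monotone hj1
          exact absurd hj.2 (not_lt.2 (le_trans htc this))
        rw [← heq]
        exact ih (D.tc k) htck (le_refl _)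
  have main : ∀ t : ℝ, 0 ≤ t → t < D.t0 → E t = E 0 := by
    intro t ht0 ht1
    have : ∀ᶠ k in atTop, t < D.tc k := D.tc_lim.eventually (eventually_gt_nhds ht1)
    obtain ⟨k, hk⟩ := this.exists
    exact claim k t ht0 hk.le
  intro t s ht0 ht1 hs0 hs1
  rw [show (∑ i ∈ Finset.univ.filter (fun i : Fin n => i.val ≤ D.a),
      (m i * D.q t i + (1 / 2) * m i * D.v t i ^ 2)) = E t from rfl,
    show (∑ i ∈ Finset.univ.filter (fun i : Fin n => i.val ≤ D.a),
      (m i * D.q s i + (1 / 2) * m i * D.v s i ^ 2)) = E s from rfl,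
    main t ht0 ht1, main s hs0 hs1]
end

section
/- (Proposition A.1) No accumulating collision datum exists: it is impossible to have t₀ > 0, a strictly increasing sequence of collision times t_k → t₀, an index a, collision types (i_k), a constant C, and functions q, v satisfying all the conditions of an accumulating collision datum. In other words, on a trajectory of the falling-ball system the collision moments cannot accumulate at any finite time unless the trajectory is degenerate. -/
open Matrix Filter Set

lemma collMat_mulVec {n i : ℕ} (hi : i + 1 < n) (γ : ℝ) (x : Fin n → ℝ) (j : Fin n) :
    (collMat n i γ *ᵥ x) j =
      if j.val = i then γ * x ⟨i, Nat.lt_of_succ_lt hi⟩ + (1 - γ) * x ⟨i+1, hi⟩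
      else if j.val = i + 1 then (1 + γ) * x ⟨i, Nat.lt_of_succ_lt hi⟩ - γ * x ⟨i+1, hi⟩
      else x j := by
  set i0 : Fin n := ⟨i, Nat.lt_of_succ_lt hi⟩
  set i1 : Fin n := ⟨i+1, hi⟩
  have hne : i0 ≠ i1 := by simp [i0, i1, Fin.ext_iff]
  rw [Matrix.mulVec, dotProduct]
  by_cases h0 : j.val = i
  · have : ∀ k : Fin n, collMat n i γ j k * x k =
        (if k = i0 then γ * x k else 0) + (if k = i1 then (1-γ) * x k else 0) := by
      intro k
      by_cases hk0 : k = i0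
      · subst hk0; simp [collMat, h0, hne, i0]
      · by_cases hk1 : k = i1
        · subst hk1; simp [collMat, h0, hne.symm, i1, hk0]
        · have hkv0 : k.val ≠ i := by simpa [Fin.ext_iff, i0] using hk0
          have hkv1 : k.val ≠ i + 1 := by simpa [Fin.ext_iff, i1] using hk1
          have hjk : j ≠ k := by
            intro h; apply hkv0; rw [← h, h0]
          simp [collMat, h0, hkv0, hkv1, hjk, Ne.symm hjk, hk0, hk1]
    rw [Finset.sum_congr rfl (fun k _ => this k), Finset.sum_add_distrib]
    simp [h0]
  · by_cases h1 : j.val = i + 1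
    · have : ∀ k : Fin n, collMat n i γ j k * x k =
          (if k = i0 then (1+γ) * x k else 0) + (if k = i1 then (-γ) * x k else 0) := by
        intro k
        by_cases hk0 : k = i0
        · subst hk0; simp [collMat, h0, h1, i0]; omega
        · by_cases hk1 : k = i1
          · subst hk1; simp [collMat, h0, h1, i1, hk0]
          · have hkv0 : k.val ≠ i := by simpa [Fin.ext_iff, i0] using hk0
            have hkv1 : k.val ≠ i + 1 := by simpa [Fin.ext_iff, i1] using hk1
            have hjk : j ≠ k := by
              intro h; apply hkv1; rw [← h, h1]
            simp [collMat, h0, h1, hkv0, hkv1, hjk, Ne.symm hjk, hk0, hk1]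
      rw [Finset.sum_congr rfl (fun k _ => this k), Finset.sum_add_distrib]
      simp [h0, h1]
      ring
    · have : ∀ k : Fin n, collMat n i γ j k * x k = (if k = j then x k else 0) := by
        intro k
        by_cases hk : k = j
        · subst hk; simp [collMat, h0, h1]
        · have : j ≠ k := Ne.symm hk
          by_cases hkv0 : k.val = i <;> by_cases hkv1 : k.val = i+1 <;>
            simp [collMat, h0, h1, hkv0, hkv1, this, hk] <;> omega
      rw [Finset.sum_congr rfl (fun k _ => this k)]
      simp [h0, h1]

lemma kinetic_id {m1 m2 a b : ℝ} (h1 : 0 < m1) (h2 : 0 < m2) :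
    m1 * ((m1 - m2)/(m1+m2) * a + (1 - (m1-m2)/(m1+m2)) * b)^2
      + m2 * ((1 + (m1-m2)/(m1+m2)) * a - (m1-m2)/(m1+m2) * b)^2
      = m1 * a^2 + m2 * b^2 := by
  have h12 : m1 + m2 ≠ 0 := by positivity
  field_simp
  ring

lemma momentum_id {m1 m2 a b : ℝ} (h1 : 0 < m1) (h2 : 0 < m2) :
    m1 * ((((m1 - m2)/(m1+m2)) * a + (1 - (m1-m2)/(m1+m2)) * b) - a)
      = - (m2 * ((((1 + (m1-m2)/(m1+m2)) * a - ((m1-m2)/(m1+m2)) * b)) - b)) := by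
  have h12 : m1 + m2 ≠ 0 := by positivity
  field_simp
  ring

lemma upjump_id {m1 m2 a b : ℝ} (h1 : 0 < m1) (h2 : 0 < m2) :
    (((1 + (m1-m2)/(m1+m2)) * a - ((m1-m2)/(m1+m2)) * b)) - b
      = (2*m1/(m1+m2)) * (a - b) := by
  have h12 : m1 + m2 ≠ 0 := by positivity
  field_simp
  ring

namespace NA
variable {n : ℕ} {m : Fin n → ℝ}

lemma tc_pos (d : AccumDatum n m) (k : ℕ) : 0 < d.tc k :=
  lt_of_lt_of_le d.tc_pos (d.tc_mono.monotone (Nat.zero_le k))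

lemma tc_lt_succ (d : AccumDatum n m) (k : ℕ) : d.tc k < d.tc (k+1) := d.tc_mono (Nat.lt_succ_self k)

lemma not_mem_range (d : AccumDatum n m) (k : ℕ) {t : ℝ} (h1 : d.tc k < t) (h2 : t < d.tc (k+1)) :
    t ∉ range d.tc := by
  rintro ⟨l, rfl⟩
  have hl1 : k < l := d.tc_mono.lt_iff_lt.mp h1
  have hl2 : l < k + 1 := d.tc_mono.lt_iff_lt.mp h2
  omega

lemma v_hasDerivAt (d : AccumDatum n m) {k : ℕ} {t : ℝ} (h1 : d.tc k < t) (h2 : t < d.tc (k+1))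
    (j : Fin n) : HasDerivAt (fun s => d.v s j) (-1) t := by
  have h0 : (0:ℝ) < t := lt_trans (tc_pos d k) h1
  have ht0 : t < d.t0 := lt_trans h2 (d.tc_lt (k+1))
  exact (d.v_deriv t h0.le ht0 (not_mem_range d k h1 h2) j).hasDerivAt (Ico_mem_nhds h0 ht0)

lemma v_affine (d : AccumDatum n m) {k : ℕ} {t : ℝ} (h1 : d.tc k < t) (h2 : t < d.tc (k+1))
    (j : Fin n) : d.v t j = d.v (d.tc k) j - (t - d.tc k) := by
  have step : ∀ s, d.tc k < s → s ≤ t → d.v t j + t = d.v s j + s := by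
    intro s hs hst
    have key := constant_of_has_deriv_right_zero (f := fun y => d.v y j + y) (a := s) (b := t)
      (fun y hy => by
        have hy1 : d.tc k < y := lt_of_lt_of_le hs hy.1
        have hy2 : y < d.tc (k+1) := lt_of_le_of_lt hy.2 h2
        exact (((v_hasDerivAt d hy1 hy2 j).add (hasDerivAt_id y)).continuousAt).continuousWithinAt)
      (fun y hy => by
        have hy1 : d.tc k < y := lt_of_lt_of_le hs hy.1
        have hy2 : y < d.tc (k+1) := lt_trans hy.2 h2
        have := (v_hasDerivAt d hy1 hy2 j).add (hasDerivAt_id y)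
        simpa using (show HasDerivWithinAt (fun y => d.v y j + y) (-1 + 1) (Ici y) y from this.hasDerivWithinAt))
      t (right_mem_Icc.mpr hst)
    exact key
  have hlim : Tendsto (fun s => d.v s j + s) (nhdsWithin (d.tc k) (Ioi (d.tc k)))
      (nhds (d.v (d.tc k) j + d.tc k)) := by
    have hrc := (d.v_rc (d.tc k) (tc_pos d k).le (d.tc_lt k) j).mono_left
      (nhdsWithin_mono _ Ioi_subset_Ici_self)
    exact hrc.add (tendsto_nhdsWithin_of_tendsto_nhds tendsto_id)
  have hev : ∀ᶠ s in nhdsWithin (d.tc k) (Ioi (d.tc k)),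
      (fun _ => d.v t j + t) s = d.v s j + s := by
    filter_upwards [Ioc_mem_nhdsGT_of_mem ⟨le_rfl, h1⟩] with s hs
    exact step s hs.1 hs.2
  have hconst : Tendsto (fun s => d.v s j + s) (nhdsWithin (d.tc k) (Ioi (d.tc k)))
      (nhds (d.v t j + t)) := tendsto_const_nhds.congr' hev
  have := tendsto_nhds_unique hconst hlim
  linarith

lemma vminus_eq (d : AccumDatum n m) (k : ℕ) (j : Fin n) :
    d.vminus (k+1) j = d.v (d.tc k) j - (d.tc (k+1) - d.tc k) := by
  have hll := d.v_ll (k+1) j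
  have hev : ∀ᶠ s in nhdsWithin (d.tc (k+1)) (Iio (d.tc (k+1))),
      d.v s j = d.v (d.tc k) j - (s - d.tc k) := by
    filter_upwards [Ioo_mem_nhdsLT_of_mem ⟨tc_lt_succ d k, le_rfl⟩] with s hs
    exact v_affine d hs.1 hs.2 j
  have hlim : Tendsto (fun s => d.v (d.tc k) j - (s - d.tc k))
      (nhdsWithin (d.tc (k+1)) (Iio (d.tc (k+1))))
      (nhds (d.v (d.tc k) j - (d.tc (k+1) - d.tc k))) := by
    apply Tendsto.mono_left _ nhdsWithin_le_nhds
    exact tendsto_const_nhds.sub (tendsto_id.sub tendsto_const_nhds)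
  exact tendsto_nhds_unique (hll.congr' hev) hlim

lemma q_step (d : AccumDatum n m) (k : ℕ) (j : Fin n) :
    d.q (d.tc (k+1)) j =
      d.q (d.tc k) j + d.v (d.tc k) j * (d.tc (k+1) - d.tc k) - (d.tc (k+1) - d.tc k)^2/2 := by
  set F : ℝ → ℝ := fun y => d.q y j - (d.v (d.tc k) j * (y - d.tc k) - (y - d.tc k)^2/2) with hF
  have hIcc : Icc (d.tc k) (d.tc (k+1)) ⊆ Ico 0 d.t0 := fun y hy =>
    ⟨le_trans (tc_pos d k).le hy.1, lt_of_le_of_lt hy.2 (d.tc_lt (k+1))⟩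
  have step : ∀ s, d.tc k < s → s < d.tc (k+1) → F (d.tc (k+1)) = F s := by
    intro s hs hst
    apply constant_of_has_deriv_right_zero (f := F) (a := s) (b := d.tc (k+1))
      (by
        apply ContinuousOn.sub
        · exact (d.q_cont j).mono (fun y hy => hIcc ⟨le_trans hs.le hy.1, hy.2⟩)
        · fun_prop)
      (fun y hy => by
        have hy1 : d.tc k < y := lt_of_lt_of_le hs hy.1
        have hy2 : y < d.tc (k+1) := hy.2
        have h0 : (0:ℝ) < y := lt_trans (tc_pos d k) hy1
        have ht0 : y < d.t0 := lt_trans hy2 (d.tc_lt (k+1))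
        have hq : HasDerivAt (fun t => d.q t j) (d.v y j) y :=
          (d.q_deriv y h0.le ht0 (not_mem_range d k hy1 hy2) j).hasDerivAt (Ico_mem_nhds h0 ht0)
        have h1' : HasDerivAt (fun t : ℝ => t - d.tc k) 1 y := (hasDerivAt_id y).sub_const _
        have hpoly : HasDerivAt (fun t => d.v (d.tc k) j * (t - d.tc k) - (t - d.tc k)^2/2)
            (d.v (d.tc k) j - (y - d.tc k)) y := by
          have h2' : HasDerivAt (fun t => d.v (d.tc k) j * (t - d.tc k) - (t - d.tc k)^2/2) _ y := (h1'.const_mul (d.v (d.tc k) j)).sub ((h1'.pow 2).div_const 2)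
          convert h2' using 1
          ring
        have hder : HasDerivAt F (d.v y j - (d.v (d.tc k) j - (y - d.tc k))) y := hq.sub hpoly
        rw [v_affine d hy1 hy2 j, sub_self] at hder
        exact hder.hasDerivWithinAt)
      (d.tc (k+1)) (right_mem_Icc.mpr hst.le)
  have hq_rc : Tendsto (fun s => d.q s j) (nhdsWithin (d.tc k) (Ioi (d.tc k)))
      (nhds (d.q (d.tc k) j)) := by
    have hc := (d.q_cont j) (d.tc k) ⟨(tc_pos d k).le, d.tc_lt k⟩
    have heq : nhdsWithin (d.tc k) (Ioi (d.tc k)) = nhdsWithin (d.tc k) (Ioo (d.tc k) d.t0) :=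
      (nhdsWithin_Ioo_eq_nhdsGT (d.tc_lt k)).symm
    rw [heq]
    exact hc.tendsto.mono_left (nhdsWithin_mono _ (fun y hy =>
      ⟨le_trans (tc_pos d k).le hy.1.le, hy.2⟩))
  have hlim : Tendsto F (nhdsWithin (d.tc k) (Ioi (d.tc k))) (nhds (d.q (d.tc k) j)) := by
    have hp : Tendsto (fun s => d.v (d.tc k) j * (s - d.tc k) - (s - d.tc k)^2/2)
        (nhdsWithin (d.tc k) (Ioi (d.tc k))) (nhds 0) := by
      apply Tendsto.mono_left _ nhdsWithin_le_nhds
      have : ContinuousAt (fun s : ℝ => d.v (d.tc k) j * (s - d.tc k) - (s - d.tc k)^2/2)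
          (d.tc k) := by fun_prop
      simpa using this.tendsto
    simpa using hq_rc.sub hp
  have hev : ∀ᶠ s in nhdsWithin (d.tc k) (Ioi (d.tc k)),
      (fun _ => F (d.tc (k+1))) s = F s := by
    filter_upwards [Ioo_mem_nhdsGT_of_mem ⟨le_rfl, tc_lt_succ d k⟩] with s hs
    exact step s hs.1 hs.2
  have hconst : Tendsto F (nhdsWithin (d.tc k) (Ioi (d.tc k))) (nhds (F (d.tc (k+1)))) :=
    tendsto_const_nhds.congr' hev
  have := tendsto_nhds_unique hconst hlim
  simp only [F] at this
  linarith

/-- jump of velocity `j` at collision number `k+1` -/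
def Jmp (d : AccumDatum n m) (k : ℕ) (j : Fin n) : ℝ :=
  d.v (d.tc (k+1)) j - d.vminus (k+1) j

lemma hi_of_ty (d : AccumDatum n m) {k i : ℕ} (h : d.ty k = i + 1) : i + 1 < n := by
  have h1 := d.ty_le k
  have h2 := d.ha
  have h3 := d.hn
  omega

lemma w_step (d : AccumDatum n m) (k : ℕ) (j : Fin n) :
    d.v (d.tc (k+1)) j = d.v (d.tc k) j - (d.tc (k+1) - d.tc k) + Jmp d k j := by
  rw [Jmp, vminus_eq d k j]; ring

lemma w_eq (d : AccumDatum n m) (K : ℕ) (j : Fin n) :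
    d.v (d.tc K) j = d.v (d.tc 0) j - (d.tc K - d.tc 0) + ∑ k ∈ Finset.range K, Jmp d k j := by
  induction K with
  | zero => simp
  | succ K ih => rw [w_step d K j, ih, Finset.sum_range_succ]; ring

lemma jmp_zero (d : AccumDatum n m) (k : ℕ) (j : Fin n) (h1 : d.ty (k+1) ≠ j.val)
    (h2 : d.ty (k+1) ≠ j.val + 1) : Jmp d k j = 0 := by
  rcases Nat.eq_zero_or_pos (d.ty (k+1)) with hty | hty
  · have hfl := d.coll_floor (k+1) hty
    have hj : j ≠ ⟨0, by have := d.hn; omega⟩ := by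
      intro h; apply h1; rw [h, hty]
    rw [Jmp, hfl.2.2.2 j hj, sub_self]
  · obtain ⟨i, hty⟩ : ∃ i, d.ty (k+1) = i + 1 := ⟨d.ty (k+1) - 1, by omega⟩
    have hi : i + 1 < n := hi_of_ty d hty
    have hp := d.coll_pair (k+1) i hi hty
    have hveq := congrFun hp.2.2 j
    rw [collMat_mulVec hi] at hveq
    have hj0 : j.val ≠ i := by omega
    have hj1 : j.val ≠ i + 1 := by omega
    rw [if_neg hj0, if_neg hj1] at hveq
    rw [Jmp, hveq, sub_self]

lemma jmp_nonneg (d : AccumDatum n m) (hm : ∀ j, 0 < m j) (k : ℕ) (j : Fin n)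
    (h2 : d.ty (k+1) ≠ j.val + 1) : 0 ≤ Jmp d k j := by
  by_cases h1 : d.ty (k+1) = j.val
  · rcases Nat.eq_zero_or_pos j.val with hj0 | hj0
    · have hfl := d.coll_floor (k+1) (by rw [h1, hj0])
      have hj : j = ⟨0, by have := d.hn; omega⟩ := by exact Fin.ext hj0
      rw [Jmp, hj]
      rw [hfl.2.2.1]
      have := hfl.2.1
      linarith
    · obtain ⟨i, hji⟩ : ∃ i, j.val = i + 1 := ⟨j.val - 1, by omega⟩
      have hi : i + 1 < n := hji ▸ j.isLt
      have hp := d.coll_pair (k+1) i hi (by rw [h1, hji])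
      have hveq := congrFun hp.2.2 j
      rw [collMat_mulVec hi] at hveq
      rw [if_neg (by omega), if_pos hji] at hveq
      have hj : j = ⟨i+1, hi⟩ := Fin.ext hji
      rw [hj] at hveq
      rw [Jmp, hj, hveq]
      rw [upjump_id (hm ⟨i, Nat.lt_of_succ_lt hi⟩) (hm ⟨i+1, hi⟩)]
      have hlt := hp.2.1
      have hmm : (0:ℝ) < 2 * m ⟨i, Nat.lt_of_succ_lt hi⟩ / (m ⟨i, Nat.lt_of_succ_lt hi⟩ + m ⟨i+1, hi⟩) := by
        have := hm ⟨i, Nat.lt_of_succ_lt hi⟩; have := hm ⟨i+1, hi⟩; positivity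
      have : 0 ≤ d.vminus (k+1) ⟨i, Nat.lt_of_succ_lt hi⟩ - d.vminus (k+1) ⟨i+1, hi⟩ := by linarith
      positivity
  · rw [jmp_zero d k j h1 h2]

lemma jmp_mom (d : AccumDatum n m) (hm : ∀ j, 0 < m j) (k : ℕ) (j : Fin n)
    (hj : (j:ℕ) + 1 < n) (h : d.ty (k+1) = j.val + 1) :
    m j * Jmp d k j = -(m ⟨j.val+1, hj⟩ * Jmp d k ⟨j.val+1, hj⟩) ∧ 0 ≤ Jmp d k ⟨j.val+1, hj⟩ := by
  constructor
  · have hp := d.coll_pair (k+1) j.val hj h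
    have hv0 := congrFun hp.2.2 j
    have hv1 := congrFun hp.2.2 ⟨j.val+1, hj⟩
    rw [collMat_mulVec hj] at hv0 hv1
    rw [if_pos rfl] at hv0
    rw [if_neg (by show ¬ (j.val + 1 = j.val); omega), if_pos rfl] at hv1
    have hje : (⟨j.val, Nat.lt_of_succ_lt hj⟩ : Fin n) = j := Fin.ext rfl
    rw [Jmp, Jmp, hv0, hv1]
    rw [hje] at *
    exact momentum_id (hm j) (hm ⟨j.val+1, hj⟩)
  · exact jmp_nonneg d hm k ⟨j.val+1, hj⟩ (by show d.ty (k+1) ≠ j.val + 1 + 1; omega)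

noncomputable def Pp (d : AccumDatum n m) (j : Fin n) (K : ℕ) : ℝ :=
  ∑ k ∈ Finset.range K, max (Jmp d k j) 0

noncomputable def Np (d : AccumDatum n m) (j : Fin n) (K : ℕ) : ℝ :=
  ∑ k ∈ Finset.range K, max (-(Jmp d k j)) 0

lemma pp_mono (d : AccumDatum n m) (j : Fin n) : Monotone (Pp d j) := by
  intro a b hab
  exact Finset.sum_le_sum_of_subset_of_nonneg (Finset.range_subset_range.mpr hab)
    (fun k _ _ => le_max_right _ _)

lemma np_mono (d : AccumDatum n m) (j : Fin n) : Monotone (Np d j) := by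
  intro a b hab
  exact Finset.sum_le_sum_of_subset_of_nonneg (Finset.range_subset_range.mpr hab)
    (fun k _ _ => le_max_right _ _)

lemma pp_sub_np (d : AccumDatum n m) (j : Fin n) (K : ℕ) :
    Pp d j K - Np d j K = ∑ k ∈ Finset.range K, Jmp d k j := by
  rw [Pp, Np, ← Finset.sum_sub_distrib]
  exact Finset.sum_congr rfl (fun k _ => max_zero_sub_eq_self _)

lemma sum_jmp_eq (d : AccumDatum n m) (K : ℕ) (j : Fin n) :
    ∑ k ∈ Finset.range K, Jmp d k j
      = d.v (d.tc K) j - d.v (d.tc 0) j + (d.tc K - d.tc 0) := by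
  have := w_eq d K j; linarith

lemma v_bdd' (d : AccumDatum n m) (k : ℕ) (j : Fin n) : |d.v (d.tc k) j| ≤ d.C :=
  d.v_bdd (d.tc k) (tc_pos d k).le (d.tc_lt k) j

/-- downward induction: positive and negative jump sums are bounded -/
lemma parts_bdd (d : AccumDatum n m) (hm : ∀ j, 0 < m j) :
    ∀ c (j : Fin n), d.a ≤ j.val + c → j.val ≤ d.a →
      ∃ B, ∀ K, Pp d j K ≤ B ∧ Np d j K ≤ B := by
  intro c
  induction c with
  | zero =>
    intro j hc hja
    refine ⟨2 * d.C + d.t0, fun K => ?_⟩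
    have hnp : Np d j K = 0 := by
      apply Finset.sum_eq_zero
      intro k _
      have h2 : d.ty (k+1) ≠ j.val + 1 := by have := d.ty_le (k+1); omega
      have := jmp_nonneg d hm k j h2
      simp [max_eq_right, neg_nonpos.mpr this]
    have hpp : Pp d j K = ∑ k ∈ Finset.range K, Jmp d k j + Np d j K := by
      have := pp_sub_np d j K; linarith
    constructor
    · rw [hpp, hnp, sum_jmp_eq]
      have h1 := abs_le.mp (v_bdd' d K j)
      have h2 := abs_le.mp (v_bdd' d 0 j)
      have h3 := (d.tc_lt K).le
      have h4 := (tc_pos d 0).le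
      linarith
    · rw [hnp]
      have := d.C_pos; have := d.t0_pos; linarith
  | succ c ih =>
    intro j hc hja
    by_cases hch : d.a ≤ j.val + c
    · exact ih j hch hja
    · have hjlt : j.val + 1 ≤ d.a := by omega
      have hj1 : j.val + 1 < n := by have := d.ha; have := d.hn; omega
      set j1 : Fin n := ⟨j.val + 1, hj1⟩ with hj1e
      obtain ⟨B', hB'⟩ := ih j1 (by show d.a ≤ j.val + 1 + c; omega)
        (by show j.val + 1 ≤ d.a; omega)
      have hr0 : 0 ≤ m j1 / m j := le_of_lt (div_pos (hm j1) (hm j))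
      have key : ∀ k, max (-(Jmp d k j)) 0 ≤ (m j1 / m j) * max (Jmp d k j1) 0 := by
        intro k
        by_cases hty : d.ty (k+1) = j.val + 1
        · obtain ⟨hmom, hpos⟩ := jmp_mom d hm k j hj1 hty
          have h1 : Jmp d k j = -(m j1 * Jmp d k j1) / m j := by
            have hmj := (hm j).ne'
            field_simp
            linarith
          have hnn : 0 ≤ m j1 * Jmp d k j1 / m j := by
            have h2 := hm j; have h3 := (hm j1).le
            positivity
          rw [h1, neg_div, neg_neg, max_eq_left hnn, max_eq_left hpos]
          exact le_of_eq (by ring)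
        · have := jmp_nonneg d hm k j hty
          have h1 : max (-(Jmp d k j)) 0 = 0 := max_eq_right (neg_nonpos.mpr this)
          rw [h1]
          positivity
      have hnp : ∀ K, Np d j K ≤ (m j1 / m j) * B' := by
        intro K
        calc Np d j K ≤ ∑ k ∈ Finset.range K, (m j1 / m j) * max (Jmp d k j1) 0 :=
              Finset.sum_le_sum (fun k _ => key k)
          _ = (m j1 / m j) * Pp d j1 K := by rw [Pp, Finset.mul_sum]
          _ ≤ (m j1 / m j) * B' := by
              have := (hB' K).1
              exact mul_le_mul_of_nonneg_left this hr0
      refine ⟨2 * d.C + d.t0 + (m j1 / m j) * B' + |(m j1 / m j) * B'|, fun K => ?_⟩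
      have hB'0 : (m j1 / m j) * B' ≤ |(m j1 / m j) * B'| := le_abs_self _
      constructor
      · have hpp : Pp d j K = ∑ k ∈ Finset.range K, Jmp d k j + Np d j K := by
          have := pp_sub_np d j K; linarith
        rw [hpp, sum_jmp_eq]
        have h1 := abs_le.mp (v_bdd' d K j)
        have h2 := abs_le.mp (v_bdd' d 0 j)
        have h3 := (d.tc_lt K).le
        have h4 := (tc_pos d 0).le
        have h5 := hnp K
        have h7 := abs_nonneg ((m j1 / m j) * B')
        linarith
      · have := hnp K
        have h6 : (0:ℝ) ≤ 2 * d.C + d.t0 := by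
          have := d.C_pos; have := d.t0_pos; linarith
        have h7 := abs_nonneg ((m j1 / m j) * B')
        linarith

lemma delta_tendsto (d : AccumDatum n m) :
    Tendsto (fun k => d.tc (k+1) - d.tc k) atTop (nhds 0) := by
  have h1 := (d.tc_lim.comp (tendsto_add_atTop_nat 1)).sub d.tc_lim
  simpa using h1

lemma jmp_tendsto_and_v_lim (d : AccumDatum n m) (hm : ∀ j, 0 < m j) (j : Fin n)
    (hj : j.val ≤ d.a) :
    Tendsto (fun k => Jmp d k j) atTop (nhds 0) ∧
      ∃ V, Tendsto (fun K => d.v (d.tc K) j) atTop (nhds V) := by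
  obtain ⟨B, hB⟩ := parts_bdd d hm (d.a - j.val) j (by omega) hj
  have hpb : BddAbove (range (Pp d j)) := ⟨B, by rintro x ⟨K, rfl⟩; exact (hB K).1⟩
  have hnb : BddAbove (range (Np d j)) := ⟨B, by rintro x ⟨K, rfl⟩; exact (hB K).2⟩
  have hP := tendsto_atTop_ciSup (pp_mono d j) hpb
  have hN := tendsto_atTop_ciSup (np_mono d j) hnb
  have hPinc : Tendsto (fun K => Pp d j (K+1) - Pp d j K) atTop (nhds 0) := by
    have := (hP.comp (tendsto_add_atTop_nat 1)).sub hP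
    simpa using this
  have hNinc : Tendsto (fun K => Np d j (K+1) - Np d j K) atTop (nhds 0) := by
    have := (hN.comp (tendsto_add_atTop_nat 1)).sub hN
    simpa using this
  have hjmp : ∀ K : ℕ, Jmp d K j = (Pp d j (K+1) - Pp d j K) - (Np d j (K+1) - Np d j K) := by
    intro K
    have h1 : Pp d j (K+1) = Pp d j K + max (Jmp d K j) 0 := Finset.sum_range_succ _ _
    have h2 : Np d j (K+1) = Np d j K + max (-(Jmp d K j)) 0 := Finset.sum_range_succ _ _
    have h3 := max_zero_sub_eq_self (Jmp d K j)
    rw [h1, h2]; linarith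
  constructor
  · have := hPinc.sub hNinc
    simp only [sub_zero] at this
    exact this.congr (fun K => (hjmp K).symm)
  · refine ⟨d.v (d.tc 0) j - (d.t0 - d.tc 0) + ((⨆ K, Pp d j K) - ⨆ K, Np d j K), ?_⟩
    have heq : ∀ K, d.v (d.tc 0) j - (d.tc K - d.tc 0) + (Pp d j K - Np d j K)
        = d.v (d.tc K) j := by
      intro K
      rw [pp_sub_np]
      have := w_eq d K j
      linarith
    apply Tendsto.congr heq
    exact (tendsto_const_nhds.sub (d.tc_lim.sub tendsto_const_nhds)).add (hP.sub hN)

/-- the balls participating in collisions -/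
def Sa (d : AccumDatum n m) : Finset (Fin n) :=
  Finset.univ.filter (fun j => (j:ℕ) ≤ d.a)

/-- energy of the subsystem of participating balls at collision time `k` -/
noncomputable def En (d : AccumDatum n m) (k : ℕ) : ℝ :=
  ∑ j ∈ Sa d, m j * ((d.v (d.tc k) j)^2/2 + d.q (d.tc k) j)

lemma v_eq_vminus_pair (d : AccumDatum n m) {c i : ℕ} (hi : i + 1 < n) (hty : d.ty c = i + 1)
    {j : Fin n} (hj0 : j.val ≠ i) (hj1 : j.val ≠ i + 1) : d.v (d.tc c) j = d.vminus c j := by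
  have hp := d.coll_pair c i hi hty
  have hveq := congrFun hp.2.2 j
  rw [collMat_mulVec hi, if_neg hj0, if_neg hj1] at hveq
  exact hveq

lemma ke_step (d : AccumDatum n m) (hm : ∀ j, 0 < m j) (k : ℕ) :
    ∑ j ∈ Sa d, m j * (d.v (d.tc (k+1)) j)^2
      = ∑ j ∈ Sa d, m j * (d.vminus (k+1) j)^2 := by
  rcases Nat.eq_zero_or_pos (d.ty (k+1)) with hty | hty
  · apply Finset.sum_congr rfl
    intro j _
    by_cases hj0 : j = ⟨0, by have := d.hn; omega⟩
    · rw [hj0, (d.coll_floor (k+1) hty).2.2.1]; ring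
    · rw [(d.coll_floor (k+1) hty).2.2.2 j hj0]
  · obtain ⟨i, htyi⟩ : ∃ i, d.ty (k+1) = i + 1 := ⟨d.ty (k+1) - 1, by omega⟩
    have hi : i + 1 < n := hi_of_ty d htyi
    have hp := d.coll_pair (k+1) i hi htyi
    set i0 : Fin n := ⟨i, Nat.lt_of_succ_lt hi⟩ with hi0e
    set i1 : Fin n := ⟨i+1, hi⟩ with hi1e
    have hne : i0 ≠ i1 := by simp [hi0e, hi1e, Fin.ext_iff]
    have hia : i + 1 ≤ d.a := htyi ▸ d.ty_le (k+1)
    have hsub : ({i0, i1} : Finset (Fin n)) ⊆ Sa d := by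
      intro x hx
      simp only [Finset.mem_insert, Finset.mem_singleton] at hx
      rcases hx with rfl | rfl <;> simp [Sa, hi0e, hi1e] <;> omega
    rw [← sub_eq_zero, ← Finset.sum_sub_distrib]
    rw [← Finset.sum_subset hsub (fun x _ hx => ?_)]
    · rw [Finset.sum_pair hne]
      have hv0 := congrFun hp.2.2 i0
      have hv1 := congrFun hp.2.2 i1
      rw [collMat_mulVec hi, if_pos rfl] at hv0
      rw [collMat_mulVec hi, if_neg (by show ¬(i+1 = i); omega), if_pos rfl] at hv1
      rw [hv0, hv1]
      have := kinetic_id (m1 := m i0) (m2 := m i1) (a := d.vminus (k+1) i0)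
        (b := d.vminus (k+1) i1) (hm i0) (hm i1)
      linarith
    · have hx0 : x.val ≠ i := by
        intro h; exact hx (by simp only [Finset.mem_insert]; left; exact Fin.ext h)
      have hx1 : x.val ≠ i + 1 := by
        intro h
        exact hx (by simp only [Finset.mem_insert, Finset.mem_singleton]; right; exact Fin.ext h)
      rw [v_eq_vminus_pair d hi htyi hx0 hx1, sub_self]

lemma en_step (d : AccumDatum n m) (hm : ∀ j, 0 < m j) (k : ℕ) : En d (k+1) = En d k := by
  have hke := ke_step d hm k
  have key : ∑ j ∈ Sa d, m j * ((d.v (d.tc (k+1)) j)^2/2 + d.q (d.tc (k+1)) j)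
      - ∑ j ∈ Sa d, m j * ((d.vminus (k+1) j)^2/2 + d.q (d.tc (k+1)) j) = 0 := by
    rw [← Finset.sum_sub_distrib]
    rw [Finset.sum_congr rfl (fun j _ => show
      m j * ((d.v (d.tc (k+1)) j)^2/2 + d.q (d.tc (k+1)) j)
        - m j * ((d.vminus (k+1) j)^2/2 + d.q (d.tc (k+1)) j)
      = (m j * (d.v (d.tc (k+1)) j)^2 - m j * (d.vminus (k+1) j)^2) / 2 from by ring)]
    rw [← Finset.sum_div, Finset.sum_sub_distrib, hke, sub_self, zero_div]
  have h2 : En d (k+1) = ∑ j ∈ Sa d, m j * ((d.vminus (k+1) j)^2/2 + d.q (d.tc (k+1)) j) := by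
    rw [En]; linarith
  rw [h2, En]
  apply Finset.sum_congr rfl
  intro j _
  rw [vminus_eq d k j, q_step d k j]
  ring

lemma en_const (d : AccumDatum n m) (hm : ∀ j, 0 < m j) (k : ℕ) : En d k = En d 0 := by
  induction k with
  | zero => rfl
  | succ k ih => rw [en_step d hm k, ih]

lemma q_lim (d : AccumDatum n m) (j : Fin n) :
    ∃ Q, Tendsto (fun k => d.q (d.tc k) j) atTop (nhds Q) := by
  set g : ℕ → ℝ := fun k => d.q (d.tc (k+1)) j - d.q (d.tc k) j with hg
  have hδsumm : Summable (fun k => d.tc (k+1) - d.tc k) := by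
    apply summable_of_sum_range_le (c := d.t0 - d.tc 0)
      (fun k => sub_nonneg.mpr (tc_lt_succ d k).le)
    intro K
    rw [Finset.sum_range_sub (fun k => d.tc k)]
    have := (d.tc_lt K).le
    linarith
  have hgsumm : Summable g := by
    apply Summable.of_norm_bounded (hδsumm.mul_left (d.C + d.t0))
    intro k
    have hq := q_step d k j
    have hδpos : 0 ≤ d.tc (k+1) - d.tc k := sub_nonneg.mpr (tc_lt_succ d k).le
    have hδle : d.tc (k+1) - d.tc k ≤ d.t0 := by
      have := d.tc_lt (k+1); have := tc_pos d k; linarith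
    have hv := abs_le.mp (v_bdd' d k j)
    have hC := d.C_pos
    rw [Real.norm_eq_abs, hg]
    simp only
    have he : d.q (d.tc (k+1)) j - d.q (d.tc k) j
        = d.v (d.tc k) j * (d.tc (k+1) - d.tc k) - (d.tc (k+1) - d.tc k)^2/2 := by
      rw [hq]; ring
    rw [he, abs_le]
    constructor <;> nlinarith [hv.1, hv.2, sq_nonneg (d.tc (k+1) - d.tc k)]
  refine ⟨d.q (d.tc 0) j + ∑' k, g k, ?_⟩
  have h1 : Tendsto (fun K => d.q (d.tc 0) j + ∑ k ∈ Finset.range K, g k) atTop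
      (nhds (d.q (d.tc 0) j + ∑' k, g k)) :=
    tendsto_const_nhds.add hgsumm.hasSum.tendsto_sum_nat
  apply h1.congr
  intro K
  rw [hg, Finset.sum_range_sub (fun k => d.q (d.tc k) j)]
  ring

lemma ty_extract (d : AccumDatum n m) (i : ℕ) (hi : i ≤ d.a) :
    ∃ φ : ℕ → ℕ, StrictMono φ ∧ ∀ l, d.ty (φ l + 1) = i := by
  apply extraction_of_frequently_atTop (P := fun k => d.ty (k + 1) = i)
  rw [frequently_atTop']
  intro N
  obtain ⟨k, hk1, hk2⟩ := d.ty_inf i hi (N + 2)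
  exact ⟨k - 1, by omega, by show d.ty (k - 1 + 1) = i; rwa [show k - 1 + 1 = k by omega]⟩

lemma main (d : AccumDatum n m) : False := by
  have hm := d.hm
  have h0n : 0 < n := by have := d.hn; omega
  have hVex : ∀ j : Fin n, ∃ V, j.val ≤ d.a →
      Tendsto (fun K => d.v (d.tc K) j) atTop (nhds V) ∧
        Tendsto (fun k => Jmp d k j) atTop (nhds 0) := by
    intro j
    by_cases hj : j.val ≤ d.a
    · obtain ⟨hj0, V, hVl⟩ := jmp_tendsto_and_v_lim d hm j hj
      exact ⟨V, fun _ => ⟨hVl, hj0⟩⟩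
    · exact ⟨0, fun h => absurd h hj⟩
  choose V hV using hVex
  choose Q hQ using q_lim d
  have hφ1 : ∀ φ : ℕ → ℕ, StrictMono φ → Tendsto (fun l => φ l + 1) atTop atTop :=
    fun φ hφ => (tendsto_add_atTop_nat 1).comp hφ.tendsto_atTop
  have hL : ∀ j : Fin n, j.val ≤ d.a →
      Tendsto (fun k => d.vminus (k+1) j) atTop (nhds (V j)) := by
    intro j hj
    have h1 := ((hV j hj).1.sub (delta_tendsto d))
    rw [sub_zero] at h1
    exact h1.congr (fun k => (vminus_eq d k j).symm)
  -- velocity limits vanish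
  have hV0 : ∀ i : ℕ, ∀ hin : i < n, i ≤ d.a → V ⟨i, hin⟩ = 0 := by
    intro i
    induction i with
    | zero =>
      intro hin hi0
      obtain ⟨φ, hφ, hty⟩ := ty_extract d 0 (Nat.zero_le _)
      set j0 : Fin n := ⟨0, hin⟩ with hj0e
      have heq : ∀ l, Jmp d (φ l) j0 = -2 * d.vminus (φ l + 1) j0 := by
        intro l
        have hfl := d.coll_floor (φ l + 1) (hty l)
        have hx : d.v (d.tc (φ l + 1)) j0 = -d.vminus (φ l + 1) j0 := hfl.2.2.1
        rw [Jmp, hx]; ring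
      have h1 : Tendsto (fun l => Jmp d (φ l) j0) atTop (nhds 0) :=
        (hV j0 hi0).2.comp hφ.tendsto_atTop
      have h2 : Tendsto (fun l => -2 * d.vminus (φ l + 1) j0) atTop (nhds (-2 * V j0)) :=
        tendsto_const_nhds.mul ((hL j0 hi0).comp hφ.tendsto_atTop)
      have := tendsto_nhds_unique (h1.congr heq) h2
      linarith
    | succ i ihi =>
      intro hin hia
      have hin' : i < n := Nat.lt_of_succ_lt hin
      have hia' : i ≤ d.a := by omega
      have hiprev : V ⟨i, hin'⟩ = 0 := ihi hin' hia'
      obtain ⟨φ, hφ, hty⟩ := ty_extract d (i+1) hia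
      set i0 : Fin n := ⟨i, hin'⟩ with hi0e
      set i1 : Fin n := ⟨i+1, hin⟩ with hi1e
      have heq : ∀ l, Jmp d (φ l) i1 =
          (2 * m i0 / (m i0 + m i1)) *
            (d.vminus (φ l + 1) i0 - d.vminus (φ l + 1) i1) := by
        intro l
        have hp := d.coll_pair (φ l + 1) i hin (hty l)
        have hv1 := congrFun hp.2.2 i1
        rw [collMat_mulVec hin, if_neg (by show ¬(i+1 = i); omega), if_pos rfl] at hv1
        rw [Jmp, hv1]
        exact upjump_id (hm i0) (hm i1)
      have h1 : Tendsto (fun l => Jmp d (φ l) i1) atTop (nhds 0) :=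
        (hV i1 hia).2.comp hφ.tendsto_atTop
      have h2 : Tendsto (fun l => (2 * m i0 / (m i0 + m i1)) *
            (d.vminus (φ l + 1) i0 - d.vminus (φ l + 1) i1)) atTop
          (nhds ((2 * m i0 / (m i0 + m i1)) * (V i0 - V i1))) :=
        tendsto_const_nhds.mul
          (((hL i0 hia').comp hφ.tendsto_atTop).sub ((hL i1 hia).comp hφ.tendsto_atTop))
      have huniq := tendsto_nhds_unique (h1.congr heq) h2
      have hc : 0 < 2 * m i0 / (m i0 + m i1) := by
        have := hm i0; have := hm i1; positivity
      have hd : V i0 - V i1 = 0 := by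
        rcases mul_eq_zero.mp huniq.symm with h | h
        · exact absurd h hc.ne'
        · exact h
      rw [hi0e] at hd
      rw [hiprev] at hd
      linarith
  -- position limits vanish
  have hQ0 : ∀ i : ℕ, ∀ hin : i < n, i ≤ d.a → Q ⟨i, hin⟩ = 0 := by
    intro i
    induction i with
    | zero =>
      intro hin hi0
      obtain ⟨φ, hφ, hty⟩ := ty_extract d 0 (Nat.zero_le _)
      set j0 : Fin n := ⟨0, hin⟩ with hj0e
      have h1 : Tendsto (fun l => d.q (d.tc (φ l + 1)) j0) atTop (nhds (Q j0)) :=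
        (hQ j0).comp (hφ1 φ hφ)
      have h2 : Tendsto (fun l => d.q (d.tc (φ l + 1)) j0) atTop (nhds 0) := by
        have heq : ∀ l, d.q (d.tc (φ l + 1)) j0 = 0 := fun l => (d.coll_floor (φ l + 1) (hty l)).1
        rw [tendsto_congr heq]
        exact tendsto_const_nhds
      exact tendsto_nhds_unique h1 h2
    | succ i ihi =>
      intro hin hia
      have hin' : i < n := Nat.lt_of_succ_lt hin
      have hia' : i ≤ d.a := by omega
      have hiprev : Q ⟨i, hin'⟩ = 0 := ihi hin' hia'
      obtain ⟨φ, hφ, hty⟩ := ty_extract d (i+1) hia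
      set i0 : Fin n := ⟨i, hin'⟩ with hi0e
      set i1 : Fin n := ⟨i+1, hin⟩ with hi1e
      have h1 : Tendsto (fun l => d.q (d.tc (φ l + 1)) i1) atTop (nhds (Q i1)) :=
        (hQ i1).comp (hφ1 φ hφ)
      have h2 : Tendsto (fun l => d.q (d.tc (φ l + 1)) i1) atTop (nhds (Q i0)) := by
        have heq : ∀ l, d.q (d.tc (φ l + 1)) i0 = d.q (d.tc (φ l + 1)) i1 :=
          fun l => (d.coll_pair (φ l + 1) i hin (hty l)).1
        exact ((hQ i0).comp (hφ1 φ hφ)).congr heq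
      have := tendsto_nhds_unique h1 h2
      rw [this, hiprev]
  -- energy tends to zero
  have hsum0 : ∑ j ∈ Sa d, m j * ((V j)^2/2 + Q j) = 0 := by
    apply Finset.sum_eq_zero
    intro j hj
    have hja : j.val ≤ d.a := by simpa [Sa] using hj
    have hVj : V j = 0 := by have h := hV0 j.val j.isLt hja; rwa [Fin.eta] at h
    have hQj : Q j = 0 := by have h := hQ0 j.val j.isLt hja; rwa [Fin.eta] at h
    rw [hVj, hQj]
    norm_num
  have hElim : Tendsto (fun k => En d k) atTop (nhds 0) := by
    rw [← hsum0]
    apply tendsto_finset_sum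
    intro j hj
    have hja : j.val ≤ d.a := by simpa [Sa] using hj
    exact tendsto_const_nhds.mul ((((hV j hja).1.pow 2).div_const 2).add (hQ j))
  have hE0 : En d 0 = 0 := by
    have h1 : Tendsto (fun k => En d k) atTop (nhds (En d 0)) := by
      rw [tendsto_congr (fun k => en_const d hm k)]
      exact tendsto_const_nhds
    exact tendsto_nhds_unique h1 hElim
  -- all participating velocities vanish at all collision times
  have hqnn : ∀ k (j : Fin n), 0 ≤ d.q (d.tc k) j := by
    intro k j
    have h00 : 0 ≤ d.q (d.tc k) ⟨0, h0n⟩ :=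
      d.q_nonneg (d.tc k) (tc_pos d k).le (d.tc_lt k)
    have hmono := d.q_mono (d.tc k) (tc_pos d k).le (d.tc_lt k) ⟨0, h0n⟩ j
      (by simp [Fin.le_def])
    linarith
  have hw : ∀ k, ∀ j : Fin n, j.val ≤ d.a → d.v (d.tc k) j = 0 := by
    intro k j hj
    have hEk : En d k = 0 := (en_const d hm k).trans hE0
    have hterm := (Finset.sum_eq_zero_iff_of_nonneg (fun j _ => by
      have := hm j; have := hqnn k j; positivity)).mp hEk j (by simp [Sa, hj])
    have hmj := hm j
    have hq0 := hqnn k j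
    have hsq : (d.v (d.tc k) j)^2 = 0 := by nlinarith [sq_nonneg (d.v (d.tc k) j)]
    exact pow_eq_zero_iff (two_ne_zero) |>.mp hsq
  -- contradiction at collision number 1
  have hδ0 : 0 < d.tc 1 - d.tc 0 := sub_pos.mpr (tc_lt_succ d 0)
  rcases Nat.eq_zero_or_pos (d.ty 1) with hty | hty
  · have hfl := d.coll_floor 1 hty
    set j0 : Fin n := ⟨0, h0n⟩ with hj0e
    have key : d.v (d.tc 1) j0 = -d.vminus 1 j0 := hfl.2.2.1
    have hlm : d.vminus 1 j0 = d.v (d.tc 0) j0 - (d.tc 1 - d.tc 0) := vminus_eq d 0 j0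
    have hw1 : d.v (d.tc 1) j0 = 0 := hw 1 j0 (Nat.zero_le _)
    have hw0 : d.v (d.tc 0) j0 = 0 := hw 0 j0 (Nat.zero_le _)
    rw [hw1, hlm, hw0] at key
    linarith
  · obtain ⟨i, htyi⟩ : ∃ i, d.ty 1 = i + 1 := ⟨d.ty 1 - 1, by omega⟩
    have hi : i + 1 < n := hi_of_ty d htyi
    have hp := d.coll_pair 1 i hi htyi
    have hia : i + 1 ≤ d.a := htyi ▸ d.ty_le 1
    set i0 : Fin n := ⟨i, Nat.lt_of_succ_lt hi⟩ with hi0e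
    set i1 : Fin n := ⟨i+1, hi⟩ with hi1e
    have hlt : d.vminus 1 i0 > d.vminus 1 i1 := hp.2.1
    have h1 : d.vminus 1 i0 = d.v (d.tc 0) i0 - (d.tc 1 - d.tc 0) := vminus_eq d 0 i0
    have h2 : d.vminus 1 i1 = d.v (d.tc 0) i1 - (d.tc 1 - d.tc 0) := vminus_eq d 0 i1
    have hw0 : d.v (d.tc 0) i0 = 0 := hw 0 i0 (by show i ≤ d.a; omega)
    have hw1 : d.v (d.tc 0) i1 = 0 := hw 0 i1 (by show i + 1 ≤ d.a; omega)
    rw [h1, h2, hw0, hw1] at hlt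
    linarith
end NA

/-- Proposition A.1: no accumulating collision datum exists; that is, on a
trajectory of the falling-ball system the collision moments cannot accumulate at any
finite time unless the trajectory is degenerate. -/
theorem no_accum_datum (n : ℕ) (m : Fin n → ℝ) : IsEmpty (AccumDatum n m) := by
  exact ⟨fun d => NA.main d⟩
end
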